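/- Let f: ℝ → (−∞,+∞] be convex, increasing and lower semicontinuous with effective domain a neighborhood of zero. Then for every a in the effective domain of (f∘exp)* with a > 0, one has (f∘exp)*(a) = min_{α>0} { f*(α) − a·ln α } + exp*(a), where exp*(a) = a ln a − a. -/

import Mathlib

open scoped EReal

/-- The Legendre–Fenchel transform of an extended-real-valued function on `ℝ`. -/
noncomputable def eConj (f : ℝ → EReal) (a : ℝ) : EReal :=
  ⨆ t : ℝ, ((a * t : ℝ) : EReal) - f t

namespace ConjCompExpAux

lemma comb {x y z : ℝ} (hxz : x < z) :
    y = ((z - y) / (z - x)) * x + (1 - (z - y) / (z - x)) * z := by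
  have hne : z - x ≠ 0 := by linarith
  have h : (z - y) / (z - x) * (z - x) = z - y := div_mul_cancel₀ _ hne
  linear_combination h

lemma coe_sub_le_coe_iff {c1 c2 : ℝ} {x : EReal} (hx : x ≠ ⊥) :
    (c1 : EReal) - x ≤ (c2 : EReal) ↔ ((c1 - c2 : ℝ) : EReal) ≤ x := by
  induction x using EReal.rec with
  | bot => simp at hx
  | coe r =>
      rw [show ((r:ℝ):EReal) = (r:EReal) from rfl, ← EReal.coe_sub, EReal.coe_le_coe_iff,
        EReal.coe_le_coe_iff]
      constructor <;> intro <;> linarith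
  | top => simp

lemma coe_le_coe_sub_iff {c L : ℝ} {x : EReal} :
    (L : EReal) ≤ (c : EReal) - x ↔ x ≤ ((c - L : ℝ) : EReal) := by
  induction x using EReal.rec with
  | bot => simp
  | coe r =>
      rw [show ((r:ℝ):EReal) = (r:EReal) from rfl, ← EReal.coe_sub, EReal.coe_le_coe_iff,
        EReal.coe_le_coe_iff]
      constructor <;> intro <;> linarith
  | top => simp only [EReal.sub_top, le_bot_iff, top_le_iff]
           constructor
           · exact fun hh => absurd hh (EReal.coe_ne_bot _)
           · exact fun hh => absurd hh (EReal.coe_ne_top _)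

lemma ne_top_of_le_coe {x : EReal} {c : ℝ} (h : x ≤ (c : EReal)) : x ≠ ⊤ := by
  intro htt
  rw [htt, top_le_iff] at h
  exact EReal.coe_ne_top c h

lemma add_neg_le_iff {x : EReal} {b c : ℝ} :
    x + ((-b : ℝ) : EReal) ≤ ((-c : ℝ) : EReal) ↔ x ≤ ((b - c : ℝ) : EReal) := by
  induction x using EReal.rec with
  | bot => simp [EReal.bot_add]
  | coe r =>
      rw [show ((r:ℝ):EReal) = (r:EReal) from rfl, ← EReal.coe_add, EReal.coe_le_coe_iff,
        EReal.coe_le_coe_iff]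
      constructor <;> intro <;> linarith
  | top =>
      rw [EReal.top_add_coe]
      simp only [top_le_iff]
      constructor
      · exact fun hh => absurd hh (EReal.coe_ne_top _)
      · exact fun hh => absurd hh (EReal.coe_ne_top _)

/-- chord bound for an `EReal`-convex function with finite endpoint values. -/
lemma chord {f : ℝ → EReal}
    (hconv : ∀ x y s : ℝ, 0 ≤ s → s ≤ 1 →
      f (s * x + (1 - s) * y) ≤ (s : EReal) * f x + ((1 - s : ℝ) : EReal) * f y)
    {x z : ℝ} (hxz : x < z) {fx fz : ℝ} (hfx : f x = (fx : EReal)) (hfz : f z = (fz : EReal))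
    {y : ℝ} (h1 : x ≤ y) (h2 : y ≤ z) :
    f y ≤ (((z - y) / (z - x) * fx + (y - x) / (z - x) * fz : ℝ) : EReal) := by
  have hzx : (0:ℝ) < z - x := by linarith
  set s : ℝ := (z - y) / (z - x) with hs
  have hs0 : 0 ≤ s := div_nonneg (by linarith) (by linarith)
  have hs1 : s ≤ 1 := by
    rw [hs, div_le_one hzx]; linarith
  have hy : y = s * x + (1 - s) * z := by rw [hs]; exact comb hxz
  have h1s : (1 - s : ℝ) = (y - x) / (z - x) := by
    rw [hs]; field_simp; ring
  have := hconv x z s hs0 hs1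
  rw [← hy, hfx, hfz] at this
  calc f y ≤ (s : EReal) * (fx : EReal) + ((1 - s : ℝ) : EReal) * (fz : EReal) := this
    _ = (((z - y) / (z - x) * fx + (y - x) / (z - x) * fz : ℝ) : EReal) := by
        rw [← EReal.coe_mul, ← EReal.coe_mul, ← EReal.coe_add, h1s]

lemma exp_bound {a α : ℝ} (ha : 0 < a) (hα : 0 < α) (t : ℝ) :
    a * t - α * Real.exp t ≤ a * Real.log a - a - a * Real.log α := by
  have h1 := Real.add_one_le_exp (t - Real.log a + Real.log α)
  rw [Real.exp_add, Real.exp_sub, Real.exp_log ha, Real.exp_log hα] at h1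
  have h2 : 0 < Real.exp t := Real.exp_pos t
  have h3 : a * (t - Real.log a + Real.log α) + a ≤ α * Real.exp t := by
    have := mul_le_mul_of_nonneg_left h1 ha.le
    calc a * (t - Real.log a + Real.log α) + a
        = a * ((t - Real.log a + Real.log α) + 1) := by ring
      _ ≤ a * (Real.exp t / a * α) := by
          apply mul_le_mul_of_nonneg_left _ ha.le
          linarith
      _ = α * Real.exp t := by field_simp
  nlinarith
end ConjCompExpAux

open ConjCompExpAux

set_option maxRecDepth 10000 in
set_option maxHeartbeats 2000000 in
theorem conj_comp_exp_eq_min_add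
    (f : ℝ → EReal)
    (hconv : ∀ x y s : ℝ, 0 ≤ s → s ≤ 1 →
      f (s * x + (1 - s) * y) ≤ (s : EReal) * f x + ((1 - s : ℝ) : EReal) * f y)
    (hmono : Monotone f)
    (hlsc : LowerSemicontinuous f)
    (hdom : {t : ℝ | f t < ⊤} ∈ nhds (0 : ℝ))
    (a : ℝ) (ha : 0 < a)
    (hadom : eConj (fun t => f (Real.exp t)) a < ⊤) :
    ∃ m : EReal,
      IsLeast {x : EReal | ∃ α : ℝ, 0 < α ∧
          x = eConj f α - ((a * Real.log α : ℝ) : EReal)} m ∧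
        eConj (fun t => f (Real.exp t)) a = m + ((a * Real.log a - a : ℝ) : EReal) := by
  classical
  obtain ⟨δ, hδpos, hδ⟩ : ∃ δ > 0, ∀ t : ℝ, |t| < δ → f t ≠ ⊤ := by
    rw [Metric.mem_nhds_iff] at hdom
    obtain ⟨δ, hδpos, hball⟩ := hdom
    exact ⟨δ, hδpos, fun t ht => (hball (show t ∈ Metric.ball 0 δ by
      simpa [Real.dist_eq] using ht)).ne⟩
  have hf0 : f 0 ≠ ⊤ := hδ 0 (by simpa using hδpos)
  -- term of the sup for f∘exp
  have hterm : ∀ u : ℝ, 0 < u →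
      ((a * Real.log u : ℝ) : EReal) - f u ≤ eConj (fun t => f (Real.exp t)) a := by
    intro u hu
    have : ((a * Real.log u : ℝ) : EReal) - f (Real.exp (Real.log u)) ≤
        eConj (fun t => f (Real.exp t)) a := le_iSup (fun t => ((a * t : ℝ) : EReal) - f (Real.exp t)) (Real.log u)
    rwa [Real.exp_log hu] at this
  -- f is never ⊥
  have hbotpos : ∀ u : ℝ, 0 < u → f u ≠ ⊥ := by
    intro u hu hbot
    have : (⊤ : EReal) ≤ eConj (fun t => f (Real.exp t)) a := by
      have := hterm u hu
      rw [hbot, EReal.sub_bot (EReal.coe_ne_bot _)] at this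
      exact this
    exact absurd (lt_of_le_of_lt this hadom) (lt_irrefl _)
  have hbot : ∀ u : ℝ, f u ≠ ⊥ := by
    intro u hbotu
    rcases lt_or_ge 0 u with hu | hu
    · exact hbotpos u hu hbotu
    · -- convex combination of u and δ/2 landing at a positive point
      set p : ℝ := δ / 2 with hp
      have hppos : 0 < p := by positivity
      have hpu : u < p := lt_of_le_of_lt hu hppos
      set q : ℝ := p / 2 with hq
      have hqpos : 0 < q := by positivity
      have hqp : q < p := by rw [hq]; linarith
      have hs0 : 0 < (p - q) / (p - u) := div_pos (by linarith) (by linarith)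
      have hs1 : (p - q) / (p - u) ≤ 1 := by
        rw [div_le_one (by linarith)]; linarith
      have hcv := hconv u p ((p - q) / (p - u)) hs0.le hs1
      rw [← comb hpu, hbotu] at hcv
      have hsb : (((p - q) / (p - u) : ℝ) : EReal) * (⊥ : EReal) = ⊥ := by
        rw [EReal.mul_comm]
        exact EReal.bot_mul_coe_of_pos hs0
      rw [hsb, EReal.bot_add] at hcv
      exact hbotpos q hqpos (le_bot_iff.mp hcv)
  -- notation for the composed function and its conjugate
  set G : ℝ → EReal := fun t => ((a * t : ℝ) : EReal) - f (Real.exp t) with hGdef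
  have hGconj : eConj (fun t => f (Real.exp t)) a = ⨆ t : ℝ, G t := rfl
  have hf0' : f 0 = (((f 0).toReal : ℝ) : EReal) := (EReal.coe_toReal hf0 (hbot 0)).symm
  set F0 : ℝ := (f 0).toReal with hF0
  -- the conjugate value is a real number
  have habs : |δ / 2| < δ := by rw [abs_of_pos (by positivity)]; linarith
  have hconj_ne_bot : eConj (fun t => f (Real.exp t)) a ≠ ⊥ := by
    intro hbb
    have hu : f (δ / 2) = (((f (δ / 2)).toReal : ℝ) : EReal) :=
      (EReal.coe_toReal (hδ _ habs) (hbot _)).symm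
    have h1 := hterm (δ / 2) (by positivity)
    rw [hbb, le_bot_iff, hu, ← EReal.coe_sub] at h1
    exact EReal.coe_ne_bot _ h1
  set M : ℝ := (eConj (fun t => f (Real.exp t)) a).toReal with hMdef
  have hM : eConj (fun t => f (Real.exp t)) a = (M : EReal) :=
    (EReal.coe_toReal hadom.ne hconj_ne_bot).symm
  have hGle : ∀ t, G t ≤ (M : EReal) := by
    intro t
    rw [← hM]
    exact le_iSup (fun t => ((a * t : ℝ) : EReal) - f (Real.exp t)) t
  -- lower bound on f from the conjugate bound
  have hlow : ∀ t : ℝ, ((a * t - M : ℝ) : EReal) ≤ f (Real.exp t) := by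
    intro t
    exact (coe_sub_le_coe_iff (hbot _)).mp (hGle t)
  -- weak duality
  have hweak : ∀ α : ℝ, 0 < α →
      ((M - (a * Real.log a - a) : ℝ) : EReal) ≤ eConj f α - ((a * Real.log α : ℝ) : EReal) := by
    intro α hα
    have hne : eConj f α ≠ ⊥ := by
      intro hbb
      have h1 : ((α * 0 : ℝ) : EReal) - f 0 ≤ eConj f α :=
        le_iSup (fun t => ((α * t : ℝ) : EReal) - f t) 0
      rw [hbb, le_bot_iff, hf0', ← EReal.coe_sub] at h1
      exact EReal.coe_ne_bot _ h1
    rcases eq_or_ne (eConj f α) ⊤ with htop | hnetop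
    · rw [htop, EReal.top_sub_coe]
      exact le_top
    · have hr : eConj f α = (((eConj f α).toReal : ℝ) : EReal) :=
        (EReal.coe_toReal hnetop hne).symm
      set r : ℝ := (eConj f α).toReal with hrdef
      have hsup : (M : EReal) ≤ ((r + (a * Real.log a - a - a * Real.log α) : ℝ) : EReal) := by
        rw [← hM, hGconj]
        apply iSup_le
        intro t
        rcases eq_or_ne (f (Real.exp t)) ⊤ with hft | hft
        · show ((a * t : ℝ) : EReal) - f (Real.exp t) ≤ _
          rw [hft, EReal.sub_top]
          exact bot_le
        · have hfr : f (Real.exp t) = (((f (Real.exp t)).toReal : ℝ) : EReal) :=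
            (EReal.coe_toReal hft (hbot _)).symm
          have h1 : ((α * Real.exp t : ℝ) : EReal) - f (Real.exp t) ≤ eConj f α :=
            le_iSup (fun u => ((α * u : ℝ) : EReal) - f u) (Real.exp t)
          rw [hr, hfr, ← EReal.coe_sub, EReal.coe_le_coe_iff] at h1
          show ((a * t : ℝ) : EReal) - f (Real.exp t) ≤ _
          rw [hfr, ← EReal.coe_sub, EReal.coe_le_coe_iff]
          have h2 := exp_bound ha hα t
          linarith
      rw [hr, ← EReal.coe_sub, EReal.coe_le_coe_iff]
      rw [EReal.coe_le_coe_iff] at hsup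
      linarith
  -- convexity of f ∘ exp
  have hconvh : ∀ x y s : ℝ, 0 ≤ s → s ≤ 1 →
      f (Real.exp (s * x + (1 - s) * y)) ≤
        (s : EReal) * f (Real.exp x) + ((1 - s : ℝ) : EReal) * f (Real.exp y) := by
    intro x y s hs0 hs1
    have hexp : Real.exp (s * x + (1 - s) * y) ≤ s * Real.exp x + (1 - s) * Real.exp y := by
      have := convexOn_exp.2 (Set.mem_univ x) (Set.mem_univ y) hs0
        (show (0:ℝ) ≤ 1 - s by linarith) (by ring)
      simpa [smul_eq_mul] using this
    exact le_trans (hmono hexp) (hconv (Real.exp x) (Real.exp y) s hs0 hs1)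
  -- superlevel sets of G are closed
  have hclosed : ∀ L : ℝ, IsClosed {t : ℝ | (L : EReal) ≤ G t} := by
    intro L
    have hphi : LowerSemicontinuous (fun t : ℝ => f (Real.exp t) + ((-(a * t) : ℝ) : EReal)) := by
      have h1 : LowerSemicontinuous (fun t : ℝ => f (Real.exp t)) :=
        LowerSemicontinuous.comp hlsc Real.continuous_exp
      have h2 : Continuous (fun t : ℝ => ((-(a * t) : ℝ) : EReal)) :=
        continuous_coe_real_ereal.comp ((continuous_const.mul continuous_id).neg)
      exact h1.add' h2.lowerSemicontinuous
        (fun x => EReal.continuousAt_add (Or.inr (EReal.coe_ne_bot _))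
          (Or.inr (EReal.coe_ne_top _)))
    have hset : {t : ℝ | (L : EReal) ≤ G t} =
        (fun t : ℝ => f (Real.exp t) + ((-(a * t) : ℝ) : EReal)) ⁻¹' Set.Iic ((-L : ℝ) : EReal) := by
      ext t
      simp only [Set.mem_setOf_eq, Set.mem_preimage, Set.mem_Iic]
      rw [add_neg_le_iff]
      exact ⟨fun hh => coe_le_coe_sub_iff.mp hh, fun hh => coe_le_coe_sub_iff.mpr hh⟩
    rw [hset]
    exact hphi.isClosed_preimage _
  -- the superlevel set at M - 1 is bounded above
  have hub : ∃ T : ℝ, ∀ t : ℝ, ((M - 1 : ℝ) : EReal) ≤ G t → t ≤ T := by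
    by_contra hT
    push_neg at hT
    obtain ⟨t0, ht0⟩ : ∃ t0 : ℝ, ((M - 1 : ℝ) : EReal) ≤ G t0 := by
      have hlt : ((M - 1 : ℝ) : EReal) < ⨆ t, G t := by
        rw [← hGconj, hM]
        exact_mod_cast (by linarith : M - 1 < M)
      obtain ⟨t0, h⟩ := lt_iSup_iff.mp hlt
      exact ⟨t0, h.le⟩
    have hray : ∀ r : ℝ, t0 ≤ r → f (Real.exp r) ≤ ((a * r - (M - 1) : ℝ) : EReal) := by
      intro r hr
      rcases eq_or_lt_of_le hr with heq | hlt
      · rw [← heq]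
        exact coe_le_coe_sub_iff.mp ht0
      · obtain ⟨t, htS, htgt⟩ := hT r
        have h0 : f (Real.exp t0) ≤ ((a * t0 - (M - 1) : ℝ) : EReal) := coe_le_coe_sub_iff.mp ht0
        have h1 : f (Real.exp t) ≤ ((a * t - (M - 1) : ℝ) : EReal) := coe_le_coe_sub_iff.mp htS
        have hfx : f (Real.exp t0) = (((f (Real.exp t0)).toReal : ℝ) : EReal) :=
          (EReal.coe_toReal (ne_top_of_le_coe h0) (hbot _)).symm
        have hfz : f (Real.exp t) = (((f (Real.exp t)).toReal : ℝ) : EReal) :=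
          (EReal.coe_toReal (ne_top_of_le_coe h1) (hbot _)).symm
        set H0 : ℝ := (f (Real.exp t0)).toReal
        set Ht : ℝ := (f (Real.exp t)).toReal
        have ht0t : t0 < t := lt_trans hlt htgt
        have hc := chord (f := fun u => f (Real.exp u)) hconvh ht0t hfx hfz hr htgt.le
        have e0 : H0 ≤ a * t0 - (M - 1) := by
          rw [hfx, EReal.coe_le_coe_iff] at h0; exact h0
        have e1 : Ht ≤ a * t - (M - 1) := by
          rw [hfz, EReal.coe_le_coe_iff] at h1; exact h1
        refine le_trans hc ?_
        rw [EReal.coe_le_coe_iff]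
        have hD : (0:ℝ) < t - t0 := by linarith
        have hs0 : 0 ≤ (t - r) / (t - t0) := div_nonneg (by linarith) hD.le
        have hs0' : 0 ≤ (r - t0) / (t - t0) := div_nonneg (by linarith) hD.le
        have hsum : (t - r) / (t - t0) + (r - t0) / (t - t0) = 1 := by
          field_simp
          ring
        have hid : (t - r) / (t - t0) * t0 + (r - t0) / (t - t0) * t = r := by
          field_simp; ring
        have p1 : (t - r) / (t - t0) * H0 ≤ (t - r) / (t - t0) * (a * t0 - (M - 1)) :=
          mul_le_mul_of_nonneg_left e0 hs0
        have p2 : (r - t0) / (t - t0) * Ht ≤ (r - t0) / (t - t0) * (a * t - (M - 1)) :=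
          mul_le_mul_of_nonneg_left e1 hs0'
        have q3 : (t - r) / (t - t0) * (a * t0 - (M - 1))
            + (r - t0) / (t - t0) * (a * t - (M - 1)) = a * r - (M - 1) := by
          linear_combination a * hid - (M - 1) * hsum
        linarith
    -- real bounds along the ray
    have hF : ∀ w : ℝ, Real.exp t0 ≤ w → ∃ Fw : ℝ, f w = (Fw : EReal) ∧
        a * Real.log w - M ≤ Fw ∧ Fw ≤ a * Real.log w - (M - 1) := by
      intro w hw
      have hwpos : (0:ℝ) < w := lt_of_lt_of_le (Real.exp_pos t0) hw
      have hlr : t0 ≤ Real.log w := by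
        rw [← Real.log_exp t0]
        exact Real.log_le_log (Real.exp_pos t0) hw
      have h1 := hray _ hlr
      rw [Real.exp_log hwpos] at h1
      have h2 := hlow (Real.log w)
      rw [Real.exp_log hwpos] at h2
      have hne : f w = (((f w).toReal : ℝ) : EReal) :=
        (EReal.coe_toReal (ne_top_of_le_coe h1) (hbot _)).symm
      refine ⟨(f w).toReal, hne, ?_, ?_⟩
      · rw [hne, EReal.coe_le_coe_iff] at h2; exact h2
      · rw [hne, EReal.coe_le_coe_iff] at h1; exact h1
    set w1 : ℝ := Real.exp t0 with hw1def
    have hw1 : (0:ℝ) < w1 := Real.exp_pos _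
    set w2 : ℝ := w1 * Real.exp (2 / a) with hw2def
    have hw12 : w1 < w2 := by
      have h1 : (1:ℝ) < Real.exp (2 / a) := by
        rw [Real.one_lt_exp_iff]
        positivity
      nlinarith
    have hquant : ∀ w3 : ℝ, w2 < w3 →
        w3 - w1 ≤ a * (w2 - w1) * (Real.log w3 - Real.log w1) := by
      intro w3 h3
      obtain ⟨F1, hF1, hF1l, hF1u⟩ := hF w1 le_rfl
      obtain ⟨F2, hF2, hF2l, hF2u⟩ := hF w2 hw12.le
      obtain ⟨F3, hF3, hF3l, hF3u⟩ := hF w3 (by linarith)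
      have hc := chord hconv (show w1 < w3 by linarith) hF1 hF3 hw12.le h3.le
      rw [hF2, EReal.coe_le_coe_iff] at hc
      have hD : (0:ℝ) < w3 - w1 := by linarith
      have hlw2 : Real.log w2 = Real.log w1 + 2 / a := by
        rw [hw2def, Real.log_mul hw1.ne' (Real.exp_ne_zero _)]
        simp [hw1def, Real.log_exp]
      have hs0 : 0 ≤ (w3 - w2) / (w3 - w1) := div_nonneg (by linarith) hD.le
      have hs0' : 0 ≤ (w2 - w1) / (w3 - w1) := div_nonneg (by linarith) hD.le
      have hsum : (w3 - w2) / (w3 - w1) + (w2 - w1) / (w3 - w1) = 1 := by field_simp; ring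
      have hid : (w3 - w2) / (w3 - w1) * Real.log w1 + (w2 - w1) / (w3 - w1) * Real.log w3
          = Real.log w1 + (w2 - w1) / (w3 - w1) * (Real.log w3 - Real.log w1) := by
        field_simp; ring
      have p1 : (w3 - w2) / (w3 - w1) * F1
          ≤ (w3 - w2) / (w3 - w1) * (a * Real.log w1 - (M - 1)) :=
        mul_le_mul_of_nonneg_left hF1u hs0
      have p2 : (w2 - w1) / (w3 - w1) * F3
          ≤ (w2 - w1) / (w3 - w1) * (a * Real.log w3 - (M - 1)) :=
        mul_le_mul_of_nonneg_left hF3u hs0'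
      have q : a * Real.log w2 - M ≤ (w3 - w2) / (w3 - w1) * (a * Real.log w1 - (M - 1))
          + (w2 - w1) / (w3 - w1) * (a * Real.log w3 - (M - 1)) := by
        linarith [hc, hF2l]
      have q3 : (w3 - w2) / (w3 - w1) * (a * Real.log w1 - (M - 1))
          + (w2 - w1) / (w3 - w1) * (a * Real.log w3 - (M - 1))
          = a * Real.log w1
            + a * ((w2 - w1) / (w3 - w1) * (Real.log w3 - Real.log w1)) - (M - 1) := by
        linear_combination a * hid - (M - 1) * hsum
      have hkey : 1 ≤ a * ((w2 - w1) / (w3 - w1) * (Real.log w3 - Real.log w1)) := by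
        rw [q3, hlw2] at q
        have ha2 : a * (Real.log w1 + 2 / a) = a * Real.log w1 + 2 := by
          field_simp
        rw [ha2] at q
        linarith
      have h5 : a * ((w2 - w1) / (w3 - w1) * (Real.log w3 - Real.log w1)) * (w3 - w1)
          = a * (w2 - w1) * (Real.log w3 - Real.log w1) := by
        field_simp
      have h6 := mul_le_mul_of_nonneg_right hkey hD.le
      rw [one_mul, h5] at h6
      exact h6
    have hw21 : (0:ℝ) < w2 - w1 := by linarith
    have hcpos : 0 < 1 / (2 * a * (w2 - w1)) := by positivity
    have hev := Real.isLittleO_log_id_atTop.def hcpos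
    rw [Filter.eventually_atTop] at hev
    obtain ⟨x0, hx0⟩ := hev
    set C : ℝ := a * (w2 - w1) * |Real.log w1| with hCdef
    set w3 : ℝ := max (max (w2 + 1) x0) (2 * C + 2 * w1 + 1) with hw3def
    have hw3a : w2 + 1 ≤ w3 := le_trans (le_max_left _ _) (le_max_left _ _)
    have hw3b : x0 ≤ w3 := le_trans (le_max_right _ _) (le_max_left _ _)
    have hw3c : 2 * C + 2 * w1 + 1 ≤ w3 := le_max_right _ _
    have hw3pos : 0 < w3 := by
      have : (0:ℝ) < w2 + 1 := by linarith
      linarith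
    have hq := hquant w3 (by linarith)
    have hlog := hx0 w3 hw3b
    simp only [id_eq, Real.norm_eq_abs] at hlog
    rw [abs_of_pos hw3pos] at hlog
    have h7 : Real.log w3 - Real.log w1 ≤ 1 / (2 * a * (w2 - w1)) * w3 + |Real.log w1| := by
      have h71 := le_abs_self (Real.log w3)
      have h72 := neg_abs_le (Real.log w1)
      linarith
    have h8 : a * (w2 - w1) * (Real.log w3 - Real.log w1)
        ≤ a * (w2 - w1) * (1 / (2 * a * (w2 - w1)) * w3 + |Real.log w1|) :=
      mul_le_mul_of_nonneg_left h7 (by positivity)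
    have h9 : a * (w2 - w1) * (1 / (2 * a * (w2 - w1))) = 1 / 2 := by
      field_simp
    have h10 : a * (w2 - w1) * (1 / (2 * a * (w2 - w1)) * w3 + |Real.log w1|)
        = 1 / 2 * w3 + C := by
      rw [hCdef]
      linear_combination w3 * h9
    linarith
  obtain ⟨T2, hT2⟩ := hub
  set K : ℕ → Set ℝ := fun n => {t : ℝ | ((M - 1 / (n + 1) : ℝ) : EReal) ≤ G t} with hKdef
  have hKcl : ∀ n : ℕ, IsClosed (K n) := fun n => hclosed _
  have hKone : ∀ n : ℕ, (0:ℝ) < 1 / (n + 1) := by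
    intro n
    positivity
  have hKmem : ∀ n : ℕ, ∀ t ∈ K n, ((M - 1 : ℝ) : EReal) ≤ G t := by
    intro n t ht
    refine le_trans ?_ ht
    apply EReal.coe_le_coe_iff.mpr
    have h1 : (1:ℝ) / (n + 1) ≤ 1 := by
      rw [div_le_one (by positivity)]
      simp
    linarith
  have hKsub : ∀ n : ℕ, K n ⊆ Set.Icc ((M - 1 + F0) / a) T2 := by
    intro n t ht
    have h1 := hKmem n t ht
    constructor
    · have h2 := coe_le_coe_sub_iff.mp h1
      have h3 : (F0 : EReal) ≤ ((a * t - (M - 1) : ℝ) : EReal) :=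
        le_trans (le_trans (le_of_eq hf0'.symm) (hmono (Real.exp_pos t).le)) h2
      rw [EReal.coe_le_coe_iff] at h3
      rw [div_le_iff₀ ha]
      linarith
    · exact hT2 t h1
  have hKne : ∀ n : ℕ, (K n).Nonempty := by
    intro n
    have hlt : ((M - 1 / (n + 1) : ℝ) : EReal) < ⨆ t, G t := by
      rw [← hGconj, hM]
      exact_mod_cast (by linarith [hKone n] : (M - 1 / (n + 1) : ℝ) < M)
    obtain ⟨t1, h⟩ := lt_iSup_iff.mp hlt
    exact ⟨t1, h.le⟩
  have hKdec : ∀ n : ℕ, K (n + 1) ⊆ K n := by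
    intro n t ht
    simp only [hKdef, Set.mem_setOf_eq] at ht ⊢
    refine le_trans ?_ ht
    apply EReal.coe_le_coe_iff.mpr
    have h1 : (1:ℝ) / (n + 1 + 1) ≤ 1 / (n + 1) := by
      apply one_div_le_one_div_of_le (by positivity)
      push_cast
      linarith
    push_cast
    linarith
  have hKcomp : IsCompact (K 0) := IsCompact.of_isClosed_subset isCompact_Icc (hKcl 0) (hKsub 0)
  obtain ⟨tstar, htstar⟩ :=
    IsCompact.nonempty_iInter_of_sequence_nonempty_isCompact_isClosed K hKdec hKne hKcomp hKcl
  simp only [Set.mem_iInter] at htstar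
  have hGmax : G tstar = (M : EReal) := by
    refine le_antisymm (hGle tstar) ?_
    have hb1 : ((M - 1 : ℝ) : EReal) ≤ G tstar := hKmem 0 tstar (htstar 0)
    have hnetop : G tstar ≠ ⊤ := ne_top_of_le_coe (hGle tstar)
    have hnebot : G tstar ≠ ⊥ := by
      intro hbb
      rw [hbb, le_bot_iff] at hb1
      exact EReal.coe_ne_bot _ hb1
    have hgr : G tstar = (((G tstar).toReal : ℝ) : EReal) := (EReal.coe_toReal hnetop hnebot).symm
    rw [hgr, EReal.coe_le_coe_iff]
    by_contra hlt
    push_neg at hlt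
    obtain ⟨n, hn⟩ := exists_nat_one_div_lt (show (0:ℝ) < M - (G tstar).toReal by linarith)
    have h2 : ((M - 1 / (n + 1) : ℝ) : EReal) ≤ G tstar := htstar n
    rw [hgr, EReal.coe_le_coe_iff] at h2
    linarith
  -- value at the maximizer
  set ustar : ℝ := Real.exp tstar with hustardef
  have hupos : 0 < ustar := Real.exp_pos _
  have hfus : f ustar = ((a * tstar - M : ℝ) : EReal) := by
    have h1 : f ustar ≤ ((a * tstar - M : ℝ) : EReal) := coe_le_coe_sub_iff.mp (le_of_eq hGmax.symm)
    exact le_antisymm h1 (hlow tstar)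
  have hlogustar : Real.log ustar = tstar := Real.log_exp tstar
  have hkeylog : ∀ v : ℝ, 0 < v →
      (((a * tstar - M) + a * (Real.log v - tstar) : ℝ) : EReal) ≤ f v := by
    intro v hv
    have h1 := hlow (Real.log v)
    rw [Real.exp_log hv] at h1
    have h2 : ((a * tstar - M) + a * (Real.log v - tstar) : ℝ) = a * Real.log v - M := by ring
    rw [h2]
    exact h1
  -- the slope of a·log at ustar
  have hslope : Filter.Tendsto
      (fun v : ℝ => a * ((Real.log v - Real.log ustar) / (v - ustar)))
      (nhdsWithin ustar {ustar}ᶜ) (nhds (a / ustar)) := by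
    have h1 : HasDerivAt Real.log ustar⁻¹ ustar := Real.hasDerivAt_log hupos.ne'
    have h2 := hasDerivAt_iff_tendsto_slope.mp h1
    have h3 := h2.const_mul a
    rw [show a * ustar⁻¹ = a / ustar from (div_eq_mul_inv a ustar).symm] at h3
    refine Filter.Tendsto.congr (fun v => ?_) h3
    rw [slope_def_field]
  -- the subgradient inequality at ustar
  have hsub : ∀ u : ℝ, (((a * tstar - M) + a / ustar * (u - ustar) : ℝ) : EReal) ≤ f u := by
    intro u
    rcases lt_trichotomy u ustar with hlt | heq | hgt
    · -- u < ustar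
      have hfune : f u ≠ ⊤ := ne_top_of_le_coe (hfus ▸ hmono hlt.le)
      have hfu : f u = (((f u).toReal : ℝ) : EReal) := (EReal.coe_toReal hfune (hbot u)).symm
      set Fuu : ℝ := (f u).toReal with hFuu
      have hD : (0:ℝ) < ustar - u := by linarith
      have hev : ∀ᶠ v in nhdsWithin ustar (Set.Iio ustar),
          (Fuu - (a * tstar - M)) / (u - ustar)
            ≤ a * ((Real.log v - Real.log ustar) / (v - ustar)) := by
        have hmem : Set.Ioo (max u (ustar / 2)) ustar ∈ nhdsWithin ustar (Set.Iio ustar) :=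
          Ioo_mem_nhdsLT (max_lt hlt (by linarith))
        filter_upwards [hmem] with v hv
        obtain ⟨hv1, hv2⟩ := hv
        have hvpos : 0 < v := lt_of_le_of_lt (by positivity : (0:ℝ) ≤ max u (ustar/2)) hv1
        have hvu : u < v := lt_of_le_of_lt (le_max_left _ _) hv1
        have hc := chord hconv hlt hfu hfus (le_of_lt hvu) hv2.le
        have hk := hkeylog v hvpos
        have hcc := le_trans hk hc
        rw [EReal.coe_le_coe_iff] at hcc
        have he : (0:ℝ) < ustar - v := by linarith
        have hre : ((ustar - v) / (ustar - u) * Fuu + (v - u) / (ustar - u) * (a * tstar - M))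
            * (ustar - u) = (ustar - v) * Fuu + (v - u) * (a * tstar - M) := by
          field_simp
        have h1 := mul_le_mul_of_nonneg_right hcc hD.le
        rw [hre] at h1
        have key2 : a * (Real.log v - tstar) * (ustar - u)
            ≤ (ustar - v) * (Fuu - (a * tstar - M)) := by nlinarith [h1]
        have goal1 : ((a * tstar - M) - Fuu) / (ustar - u)
            ≤ (a * (tstar - Real.log v)) / (ustar - v) := by
          rw [div_le_div_iff₀ hD he]
          nlinarith [key2]
        have e1 : (Fuu - (a * tstar - M)) / (u - ustar)
            = ((a * tstar - M) - Fuu) / (ustar - u) := by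
          have h2 : u - ustar ≠ 0 := by intro hh; exact absurd hlt (by intro; linarith)
          field_simp
          ring
        have e2 : a * ((Real.log v - Real.log ustar) / (v - ustar))
            = (a * (tstar - Real.log v)) / (ustar - v) := by
          rw [hlogustar]
          have h2 : v - ustar ≠ 0 := by intro hh; exact absurd hv2 (by intro; linarith)
          field_simp
          ring
        rw [e1, e2]
        exact goal1
      have hmono2 : nhdsWithin ustar (Set.Iio ustar) ≤ nhdsWithin ustar {ustar}ᶜ :=
        nhdsWithin_mono _ (fun v hv => ne_of_lt hv)
      have hlim := ge_of_tendsto (hslope.mono_left hmono2) hev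
      rw [hfu, EReal.coe_le_coe_iff]
      rw [div_le_iff_of_neg (by linarith : u - ustar < 0)] at hlim
      linarith
    · rw [heq, hfus]
      apply EReal.coe_le_coe_iff.mpr
      simp
    · -- ustar < u
      rcases eq_or_ne (f u) ⊤ with htt | htt
      · rw [htt]; exact le_top
      have hfu : f u = (((f u).toReal : ℝ) : EReal) := (EReal.coe_toReal htt (hbot u)).symm
      set Fuu : ℝ := (f u).toReal with hFuu
      have hD : (0:ℝ) < u - ustar := by linarith
      have hev : ∀ᶠ v in nhdsWithin ustar (Set.Ioi ustar),
          a * ((Real.log v - Real.log ustar) / (v - ustar))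
            ≤ (Fuu - (a * tstar - M)) / (u - ustar) := by
        have hmem : Set.Ioc ustar u ∈ nhdsWithin ustar (Set.Ioi ustar) :=
          Ioc_mem_nhdsGT_of_mem ⟨le_rfl, hgt⟩
        filter_upwards [hmem] with v hv
        obtain ⟨hv1, hv2⟩ := hv
        have hvpos : 0 < v := lt_trans hupos hv1
        have hc := chord hconv hgt hfus hfu hv1.le hv2
        have hk := hkeylog v hvpos
        have hcc := le_trans hk hc
        rw [EReal.coe_le_coe_iff] at hcc
        have he : (0:ℝ) < v - ustar := by linarith
        have hre : ((u - v) / (u - ustar) * (a * tstar - M) + (v - ustar) / (u - ustar) * Fuu)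
            * (u - ustar) = (u - v) * (a * tstar - M) + (v - ustar) * Fuu := by
          field_simp
        have h1 := mul_le_mul_of_nonneg_right hcc hD.le
        rw [hre] at h1
        have key2 : a * (Real.log v - tstar) * (u - ustar)
            ≤ (v - ustar) * (Fuu - (a * tstar - M)) := by nlinarith [h1]
        have e2 : a * ((Real.log v - Real.log ustar) / (v - ustar))
            = (a * (Real.log v - tstar)) / (v - ustar) := by
          rw [hlogustar]
          ring
        rw [e2, div_le_div_iff₀ he hD]
        nlinarith [key2]
      have hmono2 : nhdsWithin ustar (Set.Ioi ustar) ≤ nhdsWithin ustar {ustar}ᶜ :=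
        nhdsWithin_mono _ (fun v hv => ne_of_gt hv)
      have hlim := le_of_tendsto (hslope.mono_left hmono2) hev
      rw [hfu, EReal.coe_le_coe_iff]
      rw [le_div_iff₀ hD] at hlim
      linarith
  -- computation of the conjugate of f at a/ustar
  have hαpos : 0 < a / ustar := div_pos ha hupos
  have hconjf : eConj f (a / ustar) = ((a - (a * tstar - M) : ℝ) : EReal) := by
    apply le_antisymm
    · apply iSup_le
      intro u
      calc ((a / ustar * u : ℝ) : EReal) - f u
          ≤ ((a / ustar * u : ℝ) : EReal)
              - (((a * tstar - M) + a / ustar * (u - ustar) : ℝ) : EReal) :=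
            EReal.sub_le_sub (le_refl _) (hsub u)
        _ = ((a - (a * tstar - M) : ℝ) : EReal) := by
            rw [← EReal.coe_sub]
            norm_cast
            have hcancel : a / ustar * ustar = a := div_mul_cancel₀ a hupos.ne'
            linarith
    · have h1 : ((a / ustar * ustar : ℝ) : EReal) - f ustar ≤ eConj f (a / ustar) :=
        le_iSup (fun u => ((a / ustar * u : ℝ) : EReal) - f u) ustar
      rw [hfus, ← EReal.coe_sub, div_mul_cancel₀ a hupos.ne'] at h1
      exact h1
  -- assemble the result
  have hid : (a - (a * tstar - M)) - a * Real.log (a / ustar) = M - (a * Real.log a - a) := by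
    rw [Real.log_div ha.ne' hupos.ne', hlogustar]
    ring
  refine ⟨eConj f (a / ustar) - ((a * Real.log (a / ustar) : ℝ) : EReal),
    ⟨⟨a / ustar, hαpos, rfl⟩, ?_⟩, ?_⟩
  · rintro x ⟨α, hα, rfl⟩
    have hw := hweak α hα
    refine le_trans (le_of_eq ?_) hw
    rw [hconjf, ← EReal.coe_sub, hid]
  · rw [hM, hconjf, ← EReal.coe_sub, ← EReal.coe_add, hid]
    norm_cast
    ring
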